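/- There exist absolute positive constants c and c' such that the following holds. Let B > 2 be an integer, let F be an arbitrary field, and let V be a linear code over F of length n, dimension k and minimum relative distance at least δ. If m ≥ c·(B^2·k/δ)·log(B/δ) and V_m is the projection of V onto a random multiset of m coordinates (each of the m coordinates chosen independently and uniformly from {1,...,n}, with repetitions), then with probability at least 1 - e^{-c'·δ·m/B^2} the dimension of V_m over F is k and the minimum distance of V_m is at least ((B-1)/(B+1))·δ·m. -/

import Mathlib

open Finset

section RandProjAux

attribute [local instance low] Classical.propDecidable

/-- The linear functional `v ↦ ∑ l, x l * v l` on `Fin k → F`. -/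
def RPdotL {F : Type*} [Field F] {k : ℕ} (x : Fin k → F) : (Fin k → F) →ₗ[F] F where
  toFun v := ∑ l, x l * v l
  map_add' u v := by simp [mul_add, Finset.sum_add_distrib]
  map_smul' c v := by simp [Finset.mul_sum, mul_left_comm]

lemma RPdotL_surj {F : Type*} [Field F] {k : ℕ} {x : Fin k → F} (hx : x ≠ 0) :
    Function.Surjective (RPdotL x) := by
  obtain ⟨l₀, hl₀⟩ : ∃ l₀, x l₀ ≠ 0 := by
    by_contra h
    push_neg at h
    exact hx (funext h)
  intro a
  refine ⟨Pi.single l₀ (a / x l₀), ?_⟩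
  simp only [RPdotL, LinearMap.coe_mk, AddHom.coe_mk]
  rw [Finset.sum_eq_single l₀]
  · rw [Pi.single_eq_same, mul_div_cancel₀ _ hl₀]
  · intro b _ hb
    rw [Pi.single_eq_of_ne hb, mul_zero]
  · intro h
    exact absurd (Finset.mem_univ l₀) h

lemma RPfinrank_ker {F : Type*} [Field F] {k : ℕ} {x : Fin k → F} (hx : x ≠ 0) :
    Module.finrank F (LinearMap.ker (RPdotL x)) = k - 1 := by
  have h1 := LinearMap.finrank_range_add_finrank_ker (RPdotL x)
  rw [LinearMap.range_eq_top.mpr (RPdotL_surj hx)] at h1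
  rw [finrank_top, Module.finrank_self] at h1
  rw [Module.finrank_fintype_fun_eq_card, Fintype.card_fin] at h1
  omega

/-- From a set `J` of coordinates on which a nonzero functional kills all the vectors `y j`,
extract a small subset `R` of `J` spanning all of `{y j : j ∈ J}`. -/
lemma RPspan_witness {F : Type*} [Field F] {k m : ℕ} (y : Fin m → (Fin k → F)) (x : Fin k → F)
    (hx : x ≠ 0) (J : Finset (Fin m)) (hJ : ∀ j ∈ J, ∑ l, x l * y j l = 0) :
    ∃ R : Finset (Fin m), R ⊆ J ∧ R.card ≤ k - 1 ∧
      ∀ j ∈ J, y j ∈ Submodule.span F (y '' (R : Set (Fin m))) := by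
  classical
  set s : Set (Fin k → F) := y '' (J : Set (Fin m)) with hs
  have hsub : s ⊆ (LinearMap.ker (RPdotL x) : Set (Fin k → F)) := by
    rintro z ⟨j, hj, rfl⟩
    exact hJ j (by exact_mod_cast hj)
  obtain ⟨b, hbs, hspan, hind⟩ := exists_linearIndependent F s
  have hbfin : b.Finite := ((J : Set (Fin m)).toFinite.image y).subset hbs
  letI := hbfin.fintype
  have hcard : b.toFinset.card ≤ k - 1 := by
    have h1 : Module.finrank F (Submodule.span F b) = b.toFinset.card :=
      finrank_span_set_eq_card hind
    have h2 : Submodule.span F b ≤ LinearMap.ker (RPdotL x) := by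
      rw [Submodule.span_le]
      exact fun z hz => hsub (hbs hz)
    have h3 : Module.finrank F (Submodule.span F b)
        ≤ Module.finrank F (LinearMap.ker (RPdotL x)) := Submodule.finrank_mono h2
    rw [h1, RPfinrank_ker hx] at h3
    exact h3
  have hby : ∀ z ∈ b.toFinset, ∃ j, j ∈ J ∧ y j = z := by
    intro z hz
    have : z ∈ s := hbs (hbfin.mem_toFinset.mp hz)
    obtain ⟨j, hj, rfl⟩ := this
    exact ⟨j, by exact_mod_cast hj, rfl⟩
  refine ⟨b.toFinset.attach.image (fun z => (hby z.1 z.2).choose), ?_, ?_, ?_⟩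
  · intro j hj
    obtain ⟨z, _, rfl⟩ := Finset.mem_image.mp hj
    exact (hby z.1 z.2).choose_spec.1
  · calc (b.toFinset.attach.image (fun z => (hby z.1 z.2).choose)).card
        ≤ b.toFinset.attach.card := Finset.card_image_le
      _ = b.toFinset.card := Finset.card_attach
      _ ≤ k - 1 := hcard
  · intro j hj
    have hyj : y j ∈ s := Set.mem_image_of_mem y (by exact_mod_cast hj)
    have h4 : y j ∈ Submodule.span F b := by
      rw [hspan]
      exact Submodule.subset_span hyj
    refine Submodule.span_le.mpr ?_ h4
    intro z hz
    apply Submodule.subset_span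
    refine ⟨(hby z (hbfin.mem_toFinset.mpr hz)).choose, ?_,
      (hby z (hbfin.mem_toFinset.mpr hz)).choose_spec.2⟩
    have : (hby z (hbfin.mem_toFinset.mpr hz)).choose
        ∈ b.toFinset.attach.image (fun w => (hby w.1 w.2).choose) :=
      Finset.mem_image.mpr ⟨⟨z, hbfin.mem_toFinset.mpr hz⟩, Finset.mem_attach _ _, rfl⟩
    exact_mod_cast this

lemma RPcard_filter_subtype {α : Type*} [Fintype α] (p q : α → Prop) :
    (univ.filter (fun a => p a ∧ q a)).card =
      (univ.filter (fun j : {a // p a} => q j.1)).card := by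
  rw [← Fintype.card_subtype, ← Fintype.card_subtype]
  exact Fintype.card_congr (Equiv.subtypeSubtypeEquivSubtypeInter p q).symm

lemma RPchernoff_count {S : Type*} [Fintype S] [DecidableEq S] {n : ℕ}
    (p : Fin n → Prop) (lam a : ℝ) (hlam : 0 ≤ lam) :
    ((univ.filter (fun σ : S → Fin n =>
        a < ((univ.filter (fun j : S => p (σ j))).card : ℝ))).card : ℝ)
      ≤ Real.exp (-(lam * a)) *
        (((univ.filter p).card : ℝ) * Real.exp lam
            + ((n : ℝ) - ((univ.filter p).card : ℝ))) ^ (Fintype.card S) := by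
  set D := univ.filter p with hD
  set W : ℝ := (D.card : ℝ) * Real.exp lam + ((n : ℝ) - (D.card : ℝ)) with hW
  have key : ∀ σ : S → Fin n,
      Real.exp (lam * ((univ.filter (fun j : S => p (σ j))).card : ℝ))
        = ∏ j : S, (if p (σ j) then Real.exp lam else 1) := by
    intro σ
    rw [Finset.card_filter]
    push_cast
    rw [Finset.mul_sum, Real.exp_sum]
    refine Finset.prod_congr rfl fun j _ => ?_
    by_cases h : p (σ j) <;> simp [h]
  have total : ∑ σ : S → Fin n, ∏ j : S, (if p (σ j) then Real.exp lam else 1)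
      = W ^ (Fintype.card S) := by
    have h1 := Finset.prod_univ_sum (fun _ : S => (univ : Finset (Fin n)))
      (fun _ i => if p i then Real.exp lam else 1)
    rw [Fintype.piFinset_univ] at h1
    rw [← h1]
    have h2 : ∑ i : Fin n, (if p i then Real.exp lam else 1) = W := by
      rw [Finset.sum_ite, Finset.sum_const, Finset.sum_const, nsmul_eq_mul, nsmul_eq_mul,
        mul_one]
      have h4 := Finset.card_filter_add_card_filter_not
        (s := (univ : Finset (Fin n))) (p := p)
      simp only [Finset.card_univ, Fintype.card_fin] at h4
      have h6 : ((univ.filter (fun i : Fin n => ¬ p i)).card : ℝ)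
          = (n : ℝ) - ((univ.filter p).card : ℝ) := by
        have : ((univ.filter p).card : ℝ) + ((univ.filter (fun i : Fin n => ¬ p i)).card : ℝ)
            = (n : ℝ) := by exact_mod_cast congrArg (Nat.cast (R := ℝ)) h4
        linarith
      rw [h6]
    rw [h2, Finset.prod_const, Finset.card_univ]
  have hchain : ((univ.filter (fun σ : S → Fin n =>
      a < ((univ.filter (fun j : S => p (σ j))).card : ℝ))).card : ℝ) * Real.exp (lam * a)
      ≤ W ^ (Fintype.card S) := by
    calc ((univ.filter (fun σ : S → Fin n =>
          a < ((univ.filter (fun j : S => p (σ j))).card : ℝ))).card : ℝ) * Real.exp (lam * a)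
        = ∑ _σ ∈ (univ.filter (fun σ : S → Fin n =>
            a < ((univ.filter (fun j : S => p (σ j))).card : ℝ))), Real.exp (lam * a) := by
          rw [Finset.sum_const, nsmul_eq_mul]
      _ ≤ ∑ σ ∈ (univ.filter (fun σ : S → Fin n =>
            a < ((univ.filter (fun j : S => p (σ j))).card : ℝ))),
            Real.exp (lam * ((univ.filter (fun j : S => p (σ j))).card : ℝ)) := by
          refine Finset.sum_le_sum fun σ hσ => ?_
          have hσ' := (Finset.mem_filter.mp hσ).2
          exact Real.exp_le_exp.mpr (mul_le_mul_of_nonneg_left hσ'.le hlam)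
      _ ≤ ∑ σ : S → Fin n,
            Real.exp (lam * ((univ.filter (fun j : S => p (σ j))).card : ℝ)) := by
          refine Finset.sum_le_sum_of_subset_of_nonneg (Finset.filter_subset _ _)
            fun σ _ _ => (Real.exp_pos _).le
      _ = W ^ (Fintype.card S) := by
          rw [← total]
          exact Finset.sum_congr rfl fun σ _ => key σ
  rw [Real.exp_neg, inv_mul_eq_div, le_div_iff₀ (Real.exp_pos _)]
  exact hchain

section RPA

variable {F : Type*} [Field F] {n m k : ℕ} (g : Fin n → (Fin k → F)) (R : Finset (Fin m))

/-- span of the sampled columns indexed by `R`. -/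
def RPU (ρ : {j : Fin m // j ∈ R} → Fin n) : Submodule F (Fin k → F) :=
  Submodule.span F (Set.range (fun r : {j : Fin m // j ∈ R} => g (ρ r)))

/-- the sampled columns indexed by `R` are killed by some nonzero functional. -/
def RPP (ρ : {j : Fin m // j ∈ R} → Fin n) : Prop :=
  ∃ x : Fin k → F, x ≠ 0 ∧ ∀ r : {j : Fin m // j ∈ R}, ∑ l, x l * g (ρ r) l = 0

/-- the bad event associated to a subset `R` of sample positions. -/
noncomputable def RPA (a : ℝ) : Finset (Fin m → Fin n) :=
  univ.filter (fun ω : Fin m → Fin n => RPP g R (fun r => ω r.1) ∧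
    a < ((univ.filter (fun j : {j : Fin m // j ∉ R} =>
        g (ω j.1) ∈ RPU g R (fun r => ω r.1))).card : ℝ))

lemma RPU_eq (ω : Fin m → Fin n) :
    Submodule.span F ((fun j' => g (ω j')) '' (R : Set (Fin m)))
      = RPU g R (fun r => ω r.1) := by
  apply le_antisymm
  · rw [Submodule.span_le]
    rintro z ⟨j, hj, rfl⟩
    exact Submodule.subset_span ⟨⟨j, Finset.mem_coe.mp hj⟩, rfl⟩
  · rw [RPU, Submodule.span_le]
    rintro z ⟨r, rfl⟩
    exact Submodule.subset_span ⟨r.1, Finset.mem_coe.mpr r.2, rfl⟩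

set_option maxHeartbeats 1000000 in
lemma RPcard_A_le (lam a q : ℝ) (hlam : 0 ≤ lam) (hq : 0 ≤ q)
    (HD : ∀ x : Fin k → F, x ≠ 0 →
      ((univ.filter (fun i : Fin n => ∑ l, x l * g i l = 0)).card : ℝ) ≤ q) :
    ((RPA g R a).card : ℝ)
      ≤ (n:ℝ) ^ R.card *
          (Real.exp (-(lam * a)) * ((n:ℝ) + q * (Real.exp lam - 1)) ^ (m - R.card)) := by
  set W : ℝ := (n:ℝ) + q * (Real.exp lam - 1) with hWdef
  have hexp1 : (1:ℝ) ≤ Real.exp lam := Real.one_le_exp hlam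
  have hW0 : (0:ℝ) ≤ W := by
    rw [hWdef]
    have : (0:ℝ) ≤ q * (Real.exp lam - 1) := mul_nonneg hq (by linarith)
    positivity
  have step1 : (RPA g R a).card ≤ ((univ.filter (RPP g R)).sigma
      (fun ρ : {j : Fin m // j ∈ R} → Fin n =>
        univ.filter (fun σ : {j : Fin m // j ∉ R} → Fin n =>
          a < ((univ.filter (fun j : {j : Fin m // j ∉ R} =>
            g (σ j) ∈ RPU g R ρ)).card : ℝ)))).card := by
    apply Finset.card_le_card_of_injOn
      (fun ω => (⟨fun r => ω r.1, fun j => ω j.1⟩ : Σ _ρ : ({j : Fin m // j ∈ R} → Fin n),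
        ({j : Fin m // j ∉ R} → Fin n)))
    · intro ω hω
      rw [RPA, Finset.mem_coe, Finset.mem_filter] at hω
      obtain ⟨-, hP, hcard⟩ := hω
      rw [Finset.mem_coe, Finset.mem_sigma]
      constructor
      · rw [Finset.mem_filter]
        exact ⟨Finset.mem_univ _, hP⟩
      · rw [Finset.mem_filter]
        exact ⟨Finset.mem_univ _, hcard⟩
    · intro ω1 h1 ω2 h2 heq
      obtain ⟨hfst, hsnd⟩ := Sigma.ext_iff.mp heq
      simp only at hfst hsnd
      have hsnd' := eq_of_heq hsnd
      funext j
      by_cases hj : j ∈ R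
      · exact congrFun hfst ⟨j, hj⟩
      · exact congrFun hsnd' ⟨j, hj⟩
  have hRcS : Fintype.card {j : Fin m // j ∉ R} = m - R.card := by
    simp [Fintype.card_subtype_compl]
  have step3 : ∀ ρ : {j : Fin m // j ∈ R} → Fin n, ρ ∈ univ.filter (RPP g R) →
      (((univ.filter (fun σ : {j : Fin m // j ∉ R} → Fin n =>
          a < ((univ.filter (fun j : {j : Fin m // j ∉ R} =>
            g (σ j) ∈ RPU g R ρ)).card : ℝ))).card : ℝ)
        ≤ Real.exp (-(lam * a)) * W ^ (m - R.card)) := by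
    intro ρ hρ
    rw [Finset.mem_filter] at hρ
    obtain ⟨-, x, hx, hxρ⟩ := hρ
    have hcher := RPchernoff_count (S := {j : Fin m // j ∉ R})
      (p := fun i : Fin n => g i ∈ RPU g R ρ) lam a hlam
    rw [hRcS] at hcher
    refine le_trans hcher ?_
    set D := univ.filter (fun i : Fin n => g i ∈ RPU g R ρ) with hD
    have hDsub : D ⊆ univ.filter (fun i : Fin n => ∑ l, x l * g i l = 0) := by
      intro i hi
      rw [hD, Finset.mem_filter] at hi
      rw [Finset.mem_filter]
      refine ⟨Finset.mem_univ _, ?_⟩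
      have hker : RPU g R ρ ≤ LinearMap.ker (RPdotL x) := by
        rw [RPU, Submodule.span_le]
        rintro z ⟨r, rfl⟩
        rw [SetLike.mem_coe, LinearMap.mem_ker]
        exact hxρ r
      have := hker hi.2
      rw [LinearMap.mem_ker] at this
      exact this
    have hDq : ((D.card : ℝ)) ≤ q := by
      refine le_trans ?_ (HD x hx)
      exact_mod_cast Finset.card_le_card hDsub
    have hbase : ((D.card : ℝ)) * Real.exp lam + ((n:ℝ) - (D.card : ℝ)) ≤ W := by
      rw [hWdef]; nlinarith
    have hbase0 : (0:ℝ) ≤ ((D.card : ℝ)) * Real.exp lam + ((n:ℝ) - (D.card : ℝ)) := by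
      have h5 : (D.card : ℝ) ≤ (n : ℝ) := by
        exact_mod_cast (Finset.card_le_univ D).trans_eq (by simp)
      nlinarith [Nat.cast_nonneg (α := ℝ) D.card]
    refine mul_le_mul_of_nonneg_left ?_ (Real.exp_pos _).le
    exact pow_le_pow_left₀ hbase0 hbase _
  have step2 : ((((univ.filter (RPP g R)).sigma
      (fun ρ : {j : Fin m // j ∈ R} → Fin n =>
        univ.filter (fun σ : {j : Fin m // j ∉ R} → Fin n =>
          a < ((univ.filter (fun j : {j : Fin m // j ∉ R} =>
            g (σ j) ∈ RPU g R ρ)).card : ℝ)))).card : ℝ))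
      ≤ (n:ℝ) ^ R.card * (Real.exp (-(lam * a)) * W ^ (m - R.card)) := by
    rw [Finset.card_sigma]
    push_cast
    calc ∑ ρ ∈ univ.filter (RPP g R), (((univ.filter (fun σ : {j : Fin m // j ∉ R} → Fin n =>
          a < ((univ.filter (fun j : {j : Fin m // j ∉ R} =>
            g (σ j) ∈ RPU g R ρ)).card : ℝ))).card : ℝ))
        ≤ ∑ _ρ ∈ univ.filter (RPP g R), Real.exp (-(lam * a)) * W ^ (m - R.card) :=
          Finset.sum_le_sum step3
      _ = ((univ.filter (RPP g R)).card : ℝ) * (Real.exp (-(lam * a)) * W ^ (m - R.card)) := by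
          rw [Finset.sum_const, nsmul_eq_mul]
      _ ≤ (n:ℝ) ^ R.card * (Real.exp (-(lam * a)) * W ^ (m - R.card)) := by
          refine mul_le_mul_of_nonneg_right ?_ (by positivity)
          have h6 : (univ.filter (RPP g R)).card
              ≤ Fintype.card ({j : Fin m // j ∈ R} → Fin n) := by
            rw [← Finset.card_univ]
            exact Finset.card_le_card (Finset.filter_subset _ _)
          have h7 : Fintype.card ({j : Fin m // j ∈ R} → Fin n) = n ^ R.card := by
            rw [Fintype.card_fun]
            simp
          exact_mod_cast h6.trans_eq h7
  calc ((RPA g R a).card : ℝ) ≤ _ := by exact_mod_cast step1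
    _ ≤ _ := step2

end RPA

lemma RPcard_small_subsets {m k : ℕ} (hk : 1 ≤ k) (hkm : k ≤ m) :
    ((univ.filter (fun R : Finset (Fin m) => R.card ≤ k - 1)).card : ℝ)
      ≤ Real.exp (k + k * Real.log ((m : ℝ) / k)) := by
  have hm0 : 0 < m := lt_of_lt_of_le hk hkm
  have hs0 : (0:ℝ) < (k : ℝ) / m := by positivity
  have hs1 : (k : ℝ) / m ≤ 1 := by
    rw [div_le_one (by exact_mod_cast hm0)]; exact_mod_cast hkm
  set s : ℝ := (k : ℝ) / m with hs
  have hbin : ∑ R ∈ (univ : Finset (Fin m)).powerset, s ^ R.card = (s + 1) ^ m := by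
    have h := Finset.prod_add (fun _ : Fin m => s) (fun _ : Fin m => (1:ℝ)) univ
    simp only [Finset.prod_const, Finset.prod_const_one, mul_one, Finset.card_univ,
      Fintype.card_fin, one_pow] at h
    rw [h]
  have hmain : ((univ.filter (fun R : Finset (Fin m) => R.card ≤ k - 1)).card : ℝ) * s ^ (k-1)
      ≤ (s + 1) ^ m := by
    rw [← hbin]
    calc ((univ.filter (fun R : Finset (Fin m) => R.card ≤ k - 1)).card : ℝ) * s ^ (k-1)
        = ∑ R ∈ univ.filter (fun R : Finset (Fin m) => R.card ≤ k - 1), s ^ (k-1) := by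
          rw [Finset.sum_const, nsmul_eq_mul]
      _ ≤ ∑ R ∈ univ.filter (fun R : Finset (Fin m) => R.card ≤ k - 1), s ^ R.card := by
          refine Finset.sum_le_sum fun R hR => ?_
          exact pow_le_pow_of_le_one hs0.le hs1 (Finset.mem_filter.mp hR).2
      _ ≤ ∑ R ∈ (univ : Finset (Fin m)).powerset, s ^ R.card := by
          refine Finset.sum_le_sum_of_subset_of_nonneg ?_ fun R _ _ => by positivity
          intro R hR
          exact Finset.mem_powerset.mpr (Finset.subset_univ R)
  have hexp : (s + 1) ^ m ≤ Real.exp k := by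
    have h1 : s + 1 ≤ Real.exp s := by
      have := Real.add_one_le_exp s; linarith
    have h2 : (s + 1) ^ m ≤ (Real.exp s) ^ m :=
      pow_le_pow_left₀ (by positivity) h1 m
    rw [← Real.exp_nat_mul] at h2
    have h3 : (m : ℝ) * s = k := by
      rw [hs]; field_simp
    rwa [h3] at h2
  have hsk : s ^ (k - 1) > 0 := by positivity
  have h4 : ((univ.filter (fun R : Finset (Fin m) => R.card ≤ k - 1)).card : ℝ)
      ≤ Real.exp k / s ^ (k-1) := by
    rw [le_div_iff₀ hsk]; exact hmain.trans hexp
  refine h4.trans ?_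
  have h5 : Real.exp k / s ^ (k-1) = Real.exp k * ((m : ℝ)/k) ^ (k-1) := by
    rw [div_eq_mul_inv, ← inv_pow, hs, inv_div]
  rw [h5, Real.exp_add]
  refine mul_le_mul_of_nonneg_left ?_ (Real.exp_pos _).le
  have hmk1 : (1:ℝ) ≤ (m:ℝ)/k := by
    rw [le_div_iff₀ (by exact_mod_cast hk : (0:ℝ) < (k:ℝ))]
    simpa using (by exact_mod_cast hkm : (k:ℝ) ≤ (m:ℝ))
  calc ((m : ℝ)/k) ^ (k-1) ≤ ((m : ℝ)/k) ^ k := pow_le_pow_right₀ hmk1 (Nat.sub_le k 1)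
    _ = Real.exp (k * Real.log ((m:ℝ)/k)) := by
        rw [← Real.exp_log (lt_of_lt_of_le one_pos hmk1), ← Real.exp_nat_mul]
        rw [Real.log_exp]

lemma RPnumeric_main {B k m : ℕ} {δ : ℝ} (hB : 3 ≤ B) (hδ0 : 0 < δ) (hδ1 : δ ≤ 1)
    (hk : 1 ≤ k)
    (hm : 300 * ((B:ℝ)^2 * k / δ) * Real.log ((B:ℝ)/δ) ≤ (m:ℝ)) :
    (k:ℝ) * (1 + Real.log ((m:ℝ)/(k:ℝ))) + (k:ℝ) ≤ 3/16 * (δ * m / (B:ℝ)^2) := by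
  have hB3 : (3:ℝ) ≤ (B:ℝ) := by exact_mod_cast hB
  have hB0 : (0:ℝ) < (B:ℝ) := by linarith
  have hk0 : (0:ℝ) < (k:ℝ) := by exact_mod_cast hk
  have hBd3 : (3:ℝ) ≤ (B:ℝ)/δ := by
    calc (3:ℝ) ≤ (B:ℝ) := hB3
      _ = (B:ℝ)/1 := (div_one _).symm
      _ ≤ (B:ℝ)/δ := by
          apply div_le_div_of_nonneg_left (by linarith) hδ0 hδ1
  set L : ℝ := Real.log ((B:ℝ)/δ) with hL
  have hL1 : 1 ≤ L := by
    rw [hL]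
    calc (1:ℝ) = Real.log (Real.exp 1) := (Real.log_exp 1).symm
      _ ≤ Real.log ((B:ℝ)/δ) := by
          apply Real.log_le_log (Real.exp_pos 1)
          have := Real.exp_one_lt_d9
          linarith
  set u : ℝ := δ * m / ((B:ℝ)^2 * k) with hu
  have hBk : (0:ℝ) < (B:ℝ)^2 * k := by positivity
  have hu300L : 300 * L ≤ u := by
    rw [hu, le_div_iff₀ hBk]
    have h1 := mul_le_mul_of_nonneg_right hm hδ0.le
    calc 300 * L * ((B:ℝ)^2 * k) = 300 * ((B:ℝ)^2 * k / δ) * L * δ := by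
          field_simp
      _ ≤ (m:ℝ) * δ := h1
      _ = δ * m := mul_comm _ _
  have hu300 : (300:ℝ) ≤ u := by linarith
  have hu0 : (0:ℝ) < u := by linarith
  have hmk : (m:ℝ)/k = u * ((B:ℝ)^2/δ) := by
    rw [hu]; field_simp
  have hlog1 : Real.log ((m:ℝ)/k) ≤ Real.log u + 3 * L := by
    rw [hmk, Real.log_mul (ne_of_gt hu0) (by positivity)]
    have h2 : (B:ℝ)^2/δ ≤ ((B:ℝ)/δ)^3 := by
      rw [div_pow, div_le_div_iff₀ hδ0 (by positivity)]
      have hd0 : (0:ℝ) ≤ δ * (1 - δ) * (1 + δ) :=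
        mul_nonneg (mul_nonneg hδ0.le (by linarith)) (by linarith)
      have hd3 : δ^3 ≤ δ := by nlinarith [hd0]
      have e1 : (B:ℝ)^2*δ^3 ≤ (B:ℝ)^2*δ := mul_le_mul_of_nonneg_left hd3 (by positivity)
      have hBB : (0:ℝ) ≤ (B:ℝ)^2*((B:ℝ)-1) := mul_nonneg (by positivity) (by linarith)
      have e2 : (B:ℝ)^2*δ ≤ (B:ℝ)^3*δ := by nlinarith [hBB]
      linarith
    have h3 : Real.log ((B:ℝ)^2/δ) ≤ 3 * L := by
      calc Real.log ((B:ℝ)^2/δ) ≤ Real.log (((B:ℝ)/δ)^3) :=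
            Real.log_le_log (by positivity) h2
        _ = 3 * L := by rw [Real.log_pow]; push_cast; rw [hL]
    linarith
  have hlogu : Real.log u ≤ 2 * Real.sqrt u - 2 := by
    have h4 : Real.log (Real.sqrt u) ≤ Real.sqrt u - 1 :=
      Real.log_le_sub_one_of_pos (Real.sqrt_pos.mpr hu0)
    have h5 : Real.log (Real.sqrt u) = Real.log u / 2 := Real.log_sqrt hu0.le
    linarith
  have hsqrt : Real.sqrt u ≤ u / 17 := by
    have h6 : (17:ℝ) ≤ Real.sqrt u := by
      rw [Real.le_sqrt (by norm_num) hu0.le]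
      nlinarith
    have h7 : Real.sqrt u * 17 ≤ Real.sqrt u * Real.sqrt u :=
      mul_le_mul_of_nonneg_left h6 (Real.sqrt_nonneg u)
    rw [Real.mul_self_sqrt hu0.le] at h7
    linarith
  have hLu : 3 * L ≤ u / 100 := by linarith
  have hfinal : 2 + Real.log ((m:ℝ)/k) ≤ 3/16 * u := by linarith
  have hku : (k:ℝ) * u = δ * m / (B:ℝ)^2 := by
    rw [hu]; field_simp
  calc (k:ℝ) * (1 + Real.log ((m:ℝ)/(k:ℝ))) + (k:ℝ)
      = (k:ℝ) * (2 + Real.log ((m:ℝ)/(k:ℝ))) := by ring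
    _ ≤ (k:ℝ) * (3/16 * u) := by
        apply mul_le_mul_of_nonneg_left hfinal hk0.le
    _ = 3/16 * (δ * m / (B:ℝ)^2) := by rw [← hku]; ring

lemma RPnumeric_exponent {B k m : ℕ} {δ : ℝ} (hB : 3 ≤ B) (hδ0 : 0 < δ) (hδ1 : δ ≤ 1)
    (hk : 1 ≤ k)
    (hm : 300 * ((B:ℝ)^2 * k / δ) * Real.log ((B:ℝ)/δ) ≤ (m:ℝ)) :
    (k:ℝ) + (k:ℝ) * Real.log ((m:ℝ)/(k:ℝ))
      + (-((1/((B:ℝ)+1)) * ((m:ℝ) - ((B:ℝ)-1)/((B:ℝ)+1) * δ * (m:ℝ) - (k:ℝ))))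
      + (m:ℝ) * (1/((B:ℝ)+1) - δ/((B:ℝ)+2))
      ≤ -(1/16 * δ * (m:ℝ) / (B:ℝ)^2) := by
  have hB3 : (3:ℝ) ≤ (B:ℝ) := by exact_mod_cast hB
  have hk0 : (0:ℝ) < (k:ℝ) := by exact_mod_cast hk
  have hm0 : (0:ℝ) ≤ (m:ℝ) := Nat.cast_nonneg m
  have hb1 : (0:ℝ) < (B:ℝ) + 1 := by linarith
  have hb2 : (0:ℝ) < (B:ℝ) + 2 := by linarith
  have hb0 : (0:ℝ) < (B:ℝ) := by linarith
  have h4 := RPnumeric_main hB hδ0 hδ1 hk hm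
  have hδm : (0:ℝ) ≤ δ * (m:ℝ) := mul_nonneg hδ0.le hm0
  have h3 : (k:ℝ) * (1/((B:ℝ)+1)) ≤ (k:ℝ) := by
    rw [mul_one_div]; exact div_le_self hk0.le (by linarith)
  have hC : ((B:ℝ)-1)/((B:ℝ)+1)*(1/((B:ℝ)+1)) - 1/((B:ℝ)+2) ≤ -(1/(4*(B:ℝ)^2)) := by
    rw [div_mul_div_comm, mul_one]
    rw [div_sub_div _ _ (by positivity) hb2.ne']
    rw [show -(1/(4*(B:ℝ)^2)) = (-1)/(4*(B:ℝ)^2) by rw [neg_div]]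
    rw [div_le_div_iff₀ (by positivity) (by positivity)]
    have hcube : (0:ℝ) ≤ ((B:ℝ)-3)*(B:ℝ)^2 := mul_nonneg (by linarith) (by positivity)
    nlinarith [hcube, sq_nonneg (B:ℝ), hb0.le]
  have hD1 : δ*(m:ℝ)*(((B:ℝ)-1)/((B:ℝ)+1)*(1/((B:ℝ)+1)) - 1/((B:ℝ)+2))
      ≤ δ*(m:ℝ)*(-(1/(4*(B:ℝ)^2))) := mul_le_mul_of_nonneg_left hC hδm
  have hT : (k:ℝ) + (k:ℝ) * Real.log ((m:ℝ)/(k:ℝ))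
      + (-((1/((B:ℝ)+1)) * ((m:ℝ) - ((B:ℝ)-1)/((B:ℝ)+1) * δ * (m:ℝ) - (k:ℝ))))
      + (m:ℝ) * (1/((B:ℝ)+1) - δ/((B:ℝ)+2))
      = ((k:ℝ) * (1 + Real.log ((m:ℝ)/(k:ℝ)))) + (k:ℝ) * (1/((B:ℝ)+1))
        + δ*(m:ℝ)*(((B:ℝ)-1)/((B:ℝ)+1)*(1/((B:ℝ)+1)) - 1/((B:ℝ)+2)) := by
    ring
  rw [hT]
  have hE : δ*(m:ℝ)*(-(1/(4*(B:ℝ)^2))) = -(1/4)*(δ*(m:ℝ)/(B:ℝ)^2) := by ring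
  rw [hE] at hD1
  have hgoal : -(1/16 * δ * (m:ℝ) / (B:ℝ)^2) = -(1/16)*(δ*(m:ℝ)/(B:ℝ)^2) := by ring
  rw [hgoal]
  linarith [h4, h3, hD1]



set_option maxHeartbeats 4000000 in
/-- **Random projections of linear codes.** There are absolute positive constants `c, c'` such
that the following holds. Let `B > 2` be an integer, `F` an arbitrary field and
`V ⊆ Fⁿ` a linear code of dimension `k` and minimum relative distance at least `δ`. If
`m ≥ c·(B²k/δ)·log(B/δ)`, then the proportion of multisets `ω` of `m` coordinates (i.e. maps
`Fin m → Fin n`, each coordinate uniform and independent) for which the projection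
`V_m = V.map (funLeft ω)` has dimension `k` and minimum distance at least `((B-1)/(B+1))·δ·m`
is at least `1 - e^{-c'·δ·m/B²}`. -/
theorem random_projection_of_code :
    ∃ c c' : ℝ, 0 < c ∧ 0 < c' ∧
      ∀ (F : Type*) [Field F], ∀ (n k m B : ℕ) (δ : ℝ) (V : Submodule F (Fin n → F)),
        2 < B → 0 < δ →
        Module.finrank F V = k →
        (∀ v ∈ V, v ≠ 0 → δ * n ≤ (({i | v i ≠ 0} : Set (Fin n)).ncard : ℝ)) →
        c * ((B : ℝ) ^ 2 * k / δ) * Real.log ((B : ℝ) / δ) ≤ (m : ℝ) →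
        (1 - Real.exp (-(c' * δ * m / (B : ℝ) ^ 2))) * (n : ℝ) ^ m ≤
          (({ω : Fin m → Fin n |
            Module.finrank F (V.map (LinearMap.funLeft F F ω)) = k ∧
            ∀ w ∈ V.map (LinearMap.funLeft F F ω), w ≠ 0 →
              ((B : ℝ) - 1) / ((B : ℝ) + 1) * δ * m ≤
                (({i | w i ≠ 0} : Set (Fin m)).ncard : ℝ)}).ncard : ℝ) := by
  refine ⟨300, 1/16, by norm_num, by norm_num, ?_⟩
  intro F _ n k m B δ V hB2 hδ0 hfin hdist hm
  have hB : 3 ≤ B := hB2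
  have hB3 : (3:ℝ) ≤ (B:ℝ) := by exact_mod_cast hB
  have hcard_all : Fintype.card (Fin m → Fin n) = n ^ m := by
    rw [Fintype.card_fun, Fintype.card_fin, Fintype.card_fin]
  by_cases hk0 : k = 0
  · -- degenerate case `V = ⊥`
    subst hk0
    have hVbot : V = ⊥ := Submodule.finrank_eq_zero.mp hfin
    have hGoodAll : ∀ ω : Fin m → Fin n,
        Module.finrank F (V.map (LinearMap.funLeft F F ω)) = 0 ∧
        ∀ w ∈ V.map (LinearMap.funLeft F F ω), w ≠ 0 →
          ((B : ℝ) - 1) / ((B : ℝ) + 1) * δ * m ≤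
            (({i | w i ≠ 0} : Set (Fin m)).ncard : ℝ) := by
      intro ω
      rw [hVbot, Submodule.map_bot]
      refine ⟨finrank_bot F _, fun w hw hwne => absurd ((Submodule.mem_bot F).mp hw) hwne⟩
    have hset : ({ω : Fin m → Fin n |
        Module.finrank F (V.map (LinearMap.funLeft F F ω)) = 0 ∧
        ∀ w ∈ V.map (LinearMap.funLeft F F ω), w ≠ 0 →
          ((B : ℝ) - 1) / ((B : ℝ) + 1) * δ * m ≤
            (({i | w i ≠ 0} : Set (Fin m)).ncard : ℝ)}) = Set.univ :=
      Set.eq_univ_iff_forall.mpr hGoodAll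
    rw [hset, Set.ncard_univ, Nat.card_eq_fintype_card, hcard_all]
    have h1 : (0:ℝ) ≤ Real.exp (-(1/16 * δ * m / (B:ℝ)^2)) := (Real.exp_pos _).le
    have h2 : (0:ℝ) ≤ (n:ℝ)^m := by positivity
    push_cast
    nlinarith [mul_nonneg h1 h2]
  -- main case
  have hk1 : 1 ≤ k := Nat.one_le_iff_ne_zero.mpr hk0
  have hkR : (1:ℝ) ≤ (k:ℝ) := by exact_mod_cast hk1
  -- basis and coordinates
  let b : Module.Basis (Fin k) F V := Module.finBasisOfFinrankEq F V hfin
  set e := b.equivFun with he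
  set g : Fin n → Fin k → F := fun i l => ((b l : V) : Fin n → F) i with hg
  have hrep : ∀ x : Fin k → F, ∀ i : Fin n,
      ((e.symm x : V) : Fin n → F) i = ∑ l, x l * g i l := by
    intro x i
    have h1 : (e.symm x : V) = ∑ l, x l • b l := by
      rw [he]; exact b.equivFun_symm_apply x
    rw [h1]
    rw [show ((↑(∑ l, x l • b l) : Fin n → F)) = ∑ l, x l • ((b l : V) : Fin n → F) by
      push_cast; rfl]
    rw [Finset.sum_apply]
    exact Finset.sum_congr rfl fun l _ => by simp [hg, mul_comm]
  have hsymm_ne : ∀ x : Fin k → F, x ≠ 0 → ((e.symm x : V) : Fin n → F) ≠ 0 := by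
    intro x hx h0
    apply hx
    have h1 : (e.symm x : V) = 0 := Subtype.ext h0
    exact (LinearEquiv.map_eq_zero_iff e.symm).mp h1
  -- the key distance consequence for the column vectors
  have HD : ∀ x : Fin k → F, x ≠ 0 →
      ((univ.filter (fun i : Fin n => ∑ l, x l * g i l = 0)).card : ℝ) ≤ (1-δ) * n := by
    intro x hx
    have hvV := (e.symm x).2
    have hvne := hsymm_ne x hx
    have hd := hdist _ hvV hvne
    have hset : ({i | ((e.symm x : V) : Fin n → F) i ≠ 0} : Set (Fin n))
        = ↑(univ.filter (fun i => ((e.symm x : V) : Fin n → F) i ≠ 0)) := by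
      ext i; simp
    rw [hset, Set.ncard_coe_finset] at hd
    have hsplit := Finset.card_filter_add_card_filter_not
      (s := (univ : Finset (Fin n)))
      (p := fun i => ((e.symm x : V) : Fin n → F) i ≠ 0)
    simp only [Finset.card_univ, Fintype.card_fin] at hsplit
    have hpred : univ.filter (fun i : Fin n => ∑ l, x l * g i l = 0)
        = univ.filter (fun i : Fin n => ¬ ((e.symm x : V) : Fin n → F) i ≠ 0) := by
      apply Finset.filter_congr
      intro i _
      rw [not_not, hrep x i]
    rw [hpred]
    have h10 := congrArg (Nat.cast (R := ℝ)) hsplit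
    push_cast at h10
    nlinarith [hd, h10]
  -- nondegeneracy facts
  have hVne : V ≠ ⊥ := by
    intro h
    rw [h, finrank_bot] at hfin
    exact hk0 hfin.symm
  obtain ⟨v₀, hv₀V, hv₀ne⟩ := Submodule.exists_mem_ne_zero_of_ne_bot hVne
  have hn0 : n ≠ 0 := by
    intro hn; subst hn
    exact hv₀ne (funext fun i => i.elim0)
  have hnR : (1:ℝ) ≤ (n:ℝ) := by
    exact_mod_cast Nat.pos_of_ne_zero hn0
  have hδ1 : δ ≤ 1 := by
    have hd0 := hdist v₀ hv₀V hv₀ne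
    have hle : (({i | v₀ i ≠ 0} : Set (Fin n)).ncard : ℝ) ≤ (n:ℝ) := by
      have h1 := Set.ncard_le_ncard (Set.subset_univ {i | v₀ i ≠ 0}) Set.finite_univ
      rw [Set.ncard_univ, Nat.card_eq_fintype_card, Fintype.card_fin] at h1
      exact_mod_cast h1
    nlinarith
  have hL1 : 1 ≤ Real.log ((B:ℝ)/δ) := by
    have hBd3 : (3:ℝ) ≤ (B:ℝ)/δ := by
      calc (3:ℝ) ≤ (B:ℝ) := hB3
        _ = (B:ℝ)/1 := (div_one _).symm
        _ ≤ (B:ℝ)/δ := div_le_div_of_nonneg_left (by linarith) hδ0 hδ1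
    calc (1:ℝ) = Real.log (Real.exp 1) := (Real.log_exp 1).symm
      _ ≤ Real.log ((B:ℝ)/δ) := by
          apply Real.log_le_log (Real.exp_pos 1)
          have := Real.exp_one_lt_d9
          linarith
  have hmR : (0:ℝ) < (m:ℝ) := by
    have h1 : (0:ℝ) < (B:ℝ)^2 * k / δ :=
      div_pos (mul_pos (by positivity) (by linarith)) hδ0
    calc (0:ℝ) < 300 * ((B:ℝ)^2 * k / δ) * Real.log ((B:ℝ)/δ) := by nlinarith
      _ ≤ (m:ℝ) := hm
  have hkm : k ≤ m := by
    have h1 : (k:ℝ) ≤ (B:ℝ)^2 * k / δ := by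
      rw [le_div_iff₀ hδ0]
      have e1 : (k:ℝ)*δ ≤ (k:ℝ) := by nlinarith
      have hB9 : (9:ℝ) ≤ (B:ℝ)^2 := by nlinarith [sq_nonneg ((B:ℝ) - 3)]
      have e2' : (0:ℝ) ≤ (k:ℝ) * ((B:ℝ)^2 - 1) :=
        mul_nonneg (by linarith) (by linarith)
      linarith
    have hA0 : (0:ℝ) ≤ (B:ℝ)^2*k/δ := by positivity
    have hstep : 300*((B:ℝ)^2*k/δ)*1 ≤ 300*((B:ℝ)^2*k/δ)*Real.log ((B:ℝ)/δ) :=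
      mul_le_mul_of_nonneg_left hL1 (by positivity)
    have h2 : (k:ℝ) ≤ (m:ℝ) := by nlinarith [h1, hA0, hstep, hm]
    exact_mod_cast h2
  have hτpos : (0:ℝ) < ((B : ℝ) - 1) / ((B : ℝ) + 1) * δ * (m:ℝ) :=
    mul_pos (mul_pos (div_pos (by linarith) (by linarith)) hδ0) hmR
  set lam : ℝ := 1/((B:ℝ)+1) with hlam
  have hlam0 : (0:ℝ) ≤ lam := by rw [hlam]; positivity
  set α₀ : ℝ := (m:ℝ) - ((B : ℝ) - 1) / ((B : ℝ) + 1) * δ * (m:ℝ) - k with hα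
  -- the bad event
  set BadP : (Fin m → Fin n) → Prop := fun ω => ∃ x : Fin k → F, x ≠ 0 ∧
    ((univ.filter (fun j : Fin m => ∑ l, x l * g (ω j) l ≠ 0)).card : ℝ)
      < ((B : ℝ) - 1) / ((B : ℝ) + 1) * δ * (m:ℝ) with hBadP
  set Bad := univ.filter BadP with hBad
  set RR := univ.filter (fun R : Finset (Fin m) => R.card ≤ k - 1) with hRR
  have hBadsub : Bad ⊆ RR.biUnion (fun R => RPA g R α₀) := by
    intro ω hω
    rw [hBad, Finset.mem_filter, hBadP] at hω
    obtain ⟨-, x, hx, hwt⟩ := hω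
    set J := univ.filter (fun j : Fin m => ∑ l, x l * g (ω j) l = 0) with hJ
    have hJcard : (m:ℝ) - ((B : ℝ) - 1) / ((B : ℝ) + 1) * δ * (m:ℝ) < (J.card : ℝ) := by
      have hsplit := Finset.card_filter_add_card_filter_not
        (s := (univ : Finset (Fin m))) (p := fun j : Fin m => ∑ l, x l * g (ω j) l = 0)
      simp only [Finset.card_univ, Fintype.card_fin] at hsplit
      have hwt' : ((univ.filter (fun j : Fin m =>
          ¬ ∑ l, x l * g (ω j) l = 0)).card : ℝ)
            < ((B : ℝ) - 1) / ((B : ℝ) + 1) * δ * (m:ℝ) := hwt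
      have h10 := congrArg (Nat.cast (R := ℝ)) hsplit
      push_cast at h10
      rw [hJ]
      linarith
    obtain ⟨R, hRJ, hRcard, hRspan⟩ := RPspan_witness (fun j => g (ω j)) x hx J
      (fun j hj => (Finset.mem_filter.mp hj).2)
    rw [Finset.mem_biUnion]
    refine ⟨R, by rw [hRR]; exact Finset.mem_filter.mpr ⟨Finset.mem_univ _, hRcard⟩, ?_⟩
    rw [RPA, Finset.mem_filter]
    refine ⟨Finset.mem_univ _, ⟨x, hx, fun r => (Finset.mem_filter.mp (hRJ r.2)).2⟩, ?_⟩
    have hsur : (J \ R).card ≤ (univ.filter (fun j : {j : Fin m // j ∉ R} =>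
        g (ω j.1) ∈ RPU g R (fun r => ω r.1))).card := by
      apply Finset.card_le_card_of_surjOn (fun j => j.1)
      intro j hj
      rw [Finset.coe_sdiff, Set.mem_diff] at hj
      obtain ⟨hjJ, hjR⟩ := hj
      have hjR' : j ∉ R := by simpa using hjR
      refine ⟨⟨j, hjR'⟩, ?_, rfl⟩
      rw [Finset.mem_coe, Finset.mem_filter]
      refine ⟨Finset.mem_univ _, ?_⟩
      rw [← RPU_eq g R ω]
      exact hRspan j (by simpa using hjJ)
    have hsd : (J.card : ℝ) - (R.card : ℝ) ≤ ((J \ R).card : ℝ) := by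
      have h3 : (J.card : ℝ) ≤ ((J \ R).card : ℝ) + (R.card : ℝ) := by
        exact_mod_cast Finset.card_le_card_sdiff_add_card (s := J) (t := R)
      linarith
    have hRk : (R.card : ℝ) ≤ (k:ℝ) - 1 := by
      have h1 : ((R.card : ℕ) : ℝ) ≤ ((k - 1 : ℕ) : ℝ) := by exact_mod_cast hRcard
      rw [Nat.cast_sub hk1] at h1
      simpa using h1
    have hfin2 : α₀ < ((J \ R).card : ℝ) := by
      rw [hα]; linarith
    calc α₀ < ((J \ R).card : ℝ) := hfin2
      _ ≤ _ := by exact_mod_cast hsur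
  -- counting
  have hq0 : (0:ℝ) ≤ (1-δ) * n := mul_nonneg (by linarith) (Nat.cast_nonneg n)
  set W : ℝ := (n:ℝ) + ((1-δ)*n) * (Real.exp lam - 1) with hW
  have hexp1 : (1:ℝ) ≤ Real.exp lam := Real.one_le_exp hlam0
  have hWn : (n:ℝ) ≤ W := by
    rw [hW]; nlinarith
  have hW0 : (0:ℝ) ≤ W := le_trans (Nat.cast_nonneg n) hWn
  have hcount1 : (Bad.card : ℝ) ≤ (RR.card : ℝ) * (Real.exp (-(lam * α₀)) * W ^ m) := by
    have h1 : Bad.card ≤ ∑ R ∈ RR, (RPA g R α₀).card :=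
      le_trans (Finset.card_le_card hBadsub) (Finset.card_biUnion_le)
    have h2 : ∀ R ∈ RR, ((RPA g R α₀).card : ℝ) ≤ Real.exp (-(lam * α₀)) * W ^ m := by
      intro R hR
      refine le_trans (RPcard_A_le g R lam α₀ ((1-δ)*n) hlam0 hq0 HD) ?_
      rw [← hW]
      have hRm : R.card ≤ m := by
        have := Finset.card_le_univ R
        simpa using this
      calc (n:ℝ)^R.card * (Real.exp (-(lam*α₀)) * W ^ (m - R.card))
          ≤ W^R.card * (Real.exp (-(lam*α₀)) * W ^ (m - R.card)) := by
            apply mul_le_mul_of_nonneg_right (pow_le_pow_left₀ (Nat.cast_nonneg n) hWn _)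
              (by positivity)
        _ = Real.exp (-(lam*α₀)) * W ^ m := by
            rw [mul_left_comm, ← pow_add, Nat.add_sub_cancel' hRm]
    calc (Bad.card:ℝ) ≤ ∑ R ∈ RR, ((RPA g R α₀).card:ℝ) := by exact_mod_cast h1
      _ ≤ ∑ _R ∈ RR, Real.exp (-(lam*α₀)) * W^m := Finset.sum_le_sum h2
      _ = (RR.card:ℝ) * (Real.exp (-(lam*α₀)) * W^m) := by
          rw [Finset.sum_const, nsmul_eq_mul]
  have hNR : (RR.card : ℝ) ≤ Real.exp (k + k * Real.log ((m:ℝ)/k)) := by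
    rw [hRR]; exact RPcard_small_subsets hk1 hkm
  have hWexp : W ≤ (n:ℝ) * Real.exp (lam - δ/((B:ℝ)+2)) := by
    have hfac : W = (n:ℝ) * (1 + (1-δ)*(Real.exp lam - 1)) := by rw [hW]; ring
    rw [hfac]
    refine mul_le_mul_of_nonneg_left ?_ (Nat.cast_nonneg n)
    have hb1 : (0:ℝ) < 1 + lam := by rw [hlam]; positivity
    have hEinv : Real.exp (-lam) ≤ 1 - 1/((B:ℝ)+2) := by
      have h1 : 1 + lam ≤ Real.exp lam := by linarith [Real.add_one_le_exp lam]
      have h3 : (Real.exp lam)⁻¹ ≤ (1+lam)⁻¹ := inv_anti₀ hb1 h1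
      have h4 : (1+lam)⁻¹ = 1 - 1/((B:ℝ)+2) := by
        rw [hlam]
        have hB1 : ((B:ℝ)+1) ≠ 0 := by positivity
        have hB2' : ((B:ℝ)+2) ≠ 0 := by positivity
        field_simp
        ring
      rw [Real.exp_neg]
      exact h3.trans_eq h4
    have h5 : 1 + (1-δ)*(Real.exp lam - 1)
        = Real.exp lam * (1 - δ*(1 - Real.exp (-lam))) := by
      rw [Real.exp_neg]
      have hE0 : Real.exp lam ≠ 0 := (Real.exp_pos lam).ne'
      field_simp
      ring
    rw [h5]
    have h6 : δ/((B:ℝ)+2) ≤ δ*(1 - Real.exp (-lam)) := by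
      rw [div_eq_mul_one_div]
      exact mul_le_mul_of_nonneg_left (by linarith [hEinv]) hδ0.le
    have h7 : (1:ℝ) - δ/((B:ℝ)+2) ≤ Real.exp (-(δ/((B:ℝ)+2))) := by
      linarith [Real.add_one_le_exp (-(δ/((B:ℝ)+2)))]
    calc Real.exp lam * (1 - δ*(1 - Real.exp (-lam)))
        ≤ Real.exp lam * Real.exp (-(δ/((B:ℝ)+2))) :=
          mul_le_mul_of_nonneg_left (by linarith) (Real.exp_pos _).le
      _ = Real.exp (lam - δ/((B:ℝ)+2)) := by
          rw [← Real.exp_add]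
          ring_nf
  have hWm : W ^ m ≤ (n:ℝ)^m * Real.exp ((m:ℝ) * (lam - δ/((B:ℝ)+2))) := by
    calc W^m ≤ ((n:ℝ) * Real.exp (lam - δ/((B:ℝ)+2)))^m := pow_le_pow_left₀ hW0 hWexp m
      _ = (n:ℝ)^m * Real.exp ((m:ℝ)*(lam - δ/((B:ℝ)+2))) := by
          rw [mul_pow, Real.exp_nat_mul]
  have hfinalBad : (Bad.card : ℝ) ≤ Real.exp (-(1/16 * δ * m / (B:ℝ)^2)) * (n:ℝ)^m := by
    have hbound : (Bad.card : ℝ) ≤ Real.exp (k + k*Real.log ((m:ℝ)/k))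
        * (Real.exp (-(lam * α₀)) * ((n:ℝ)^m * Real.exp ((m:ℝ)*(lam - δ/((B:ℝ)+2))))) := by
      refine le_trans hcount1 ?_
      have hx1 : Real.exp (-(lam * α₀)) * W ^ m
          ≤ Real.exp (-(lam * α₀)) * ((n:ℝ)^m * Real.exp ((m:ℝ)*(lam - δ/((B:ℝ)+2)))) :=
        mul_le_mul_of_nonneg_left hWm (Real.exp_pos _).le
      have hx2 : (0:ℝ) ≤ Real.exp (-(lam * α₀)) * W ^ m := by positivity
      exact mul_le_mul hNR hx1 hx2 (Real.exp_pos _).le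
    refine le_trans hbound ?_
    have hcollect : ∀ A A' A'' : ℝ, Real.exp A * (Real.exp A' * ((n:ℝ)^m * Real.exp A''))
        = Real.exp (A + A' + A'') * (n:ℝ)^m := by
      intro A A' A''
      rw [Real.exp_add, Real.exp_add]
      ring
    rw [hcollect]
    refine mul_le_mul_of_nonneg_right ?_ (by positivity)
    refine Real.exp_le_exp.mpr ?_
    have hnum := RPnumeric_exponent hB hδ0 hδ1 hk1 hm
    rw [hα, hlam]
    linarith [hnum]
  -- conclusion
  set NotBad := univ.filter (fun ω => ¬ BadP ω) with hNB
  have hsplitB : Bad.card + NotBad.card = n^m := by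
    rw [hBad, hNB, Finset.card_filter_add_card_filter_not, Finset.card_univ, hcard_all]
  have hGoodInc : ∀ ω : Fin m → Fin n, ¬ BadP ω →
      Module.finrank F (V.map (LinearMap.funLeft F F ω)) = k ∧
      ∀ w ∈ V.map (LinearMap.funLeft F F ω), w ≠ 0 →
        ((B : ℝ) - 1) / ((B : ℝ) + 1) * δ * m ≤ (({i | w i ≠ 0} : Set (Fin m)).ncard : ℝ) := by
    intro ω hω
    simp only [hBadP] at hω
    push_neg at hω
    have hgood : ∀ x : Fin k → F, x ≠ 0 →
        ((B : ℝ) - 1) / ((B : ℝ) + 1) * δ * m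
          ≤ ((univ.filter (fun j : Fin m => ∑ l, x l * g (ω j) l ≠ 0)).card : ℝ) := hω
    have hcoords : ∀ (v : Fin n → F) (hv : v ∈ V) (j : Fin m),
        (LinearMap.funLeft F F ω v) j = ∑ l, (e ⟨v, hv⟩) l * g (ω j) l := by
      intro v hv j
      have h1 := hrep (e ⟨v,hv⟩) (ω j)
      rw [LinearEquiv.symm_apply_apply] at h1
      rw [LinearMap.funLeft_apply]
      exact h1
    have hxne : ∀ (v : Fin n → F) (hv : v ∈ V), v ≠ 0 → e ⟨v, hv⟩ ≠ 0 := by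
      intro v hv hvne h0
      apply hvne
      have h1 : (⟨v, hv⟩ : V) = 0 := (LinearEquiv.map_eq_zero_iff e).mp h0
      exact congrArg Subtype.val h1
    constructor
    · have hinj : Function.Injective ((LinearMap.funLeft F F ω).domRestrict V) := by
        rw [injective_iff_map_eq_zero]
        intro v hv0
        by_contra hvne
        have hvne' : (v : Fin n → F) ≠ 0 := fun h => hvne (Subtype.ext h)
        have hx := hxne v.1 v.2 hvne'
        have hwt := hgood _ hx
        have hzero : univ.filter
            (fun j : Fin m => ∑ l, (e ⟨v.1, v.2⟩) l * g (ω j) l ≠ 0) = ∅ := by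
          rw [Finset.filter_eq_empty_iff]
          intro j _
          rw [not_ne_iff, ← hcoords v.1 v.2 j]
          have h3 : LinearMap.funLeft F F ω v.1 = 0 := by
            simpa [LinearMap.domRestrict_apply] using hv0
          rw [h3]
          rfl
        rw [hzero] at hwt
        simp only [Finset.card_empty, Nat.cast_zero] at hwt
        linarith
      have heq := LinearEquiv.finrank_eq (LinearEquiv.ofInjective _ hinj)
      rw [LinearMap.range_domRestrict] at heq
      rw [← heq]
      exact hfin
    · intro w hw hwne
      obtain ⟨v, hv, rfl⟩ := Submodule.mem_map.mp hw
      have hvne : v ≠ 0 := by rintro rfl; exact hwne (map_zero _)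
      have hx := hxne v hv hvne
      have hwt := hgood _ hx
      have hseteq : ({i | (LinearMap.funLeft F F ω v) i ≠ 0} : Set (Fin m))
          = ↑(univ.filter (fun j : Fin m => ∑ l, (e ⟨v, hv⟩) l * g (ω j) l ≠ 0)) := by
        ext j
        simp only [Set.mem_setOf_eq, Finset.coe_filter, Finset.mem_univ, true_and]
        rw [hcoords v hv j]
      rw [hseteq, Set.ncard_coe_finset]
      exact hwt
  have hsub : (↑NotBad : Set (Fin m → Fin n)) ⊆ {ω : Fin m → Fin n |
      Module.finrank F (V.map (LinearMap.funLeft F F ω)) = k ∧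
      ∀ w ∈ V.map (LinearMap.funLeft F F ω), w ≠ 0 →
        ((B : ℝ) - 1) / ((B : ℝ) + 1) * δ * m ≤ (({i | w i ≠ 0} : Set (Fin m)).ncard : ℝ)} := by
    intro ω hω
    rw [Finset.mem_coe, hNB, Finset.mem_filter] at hω
    exact hGoodInc ω hω.2
  have hle := Set.ncard_le_ncard hsub (Set.toFinite _)
  rw [Set.ncard_coe_finset] at hle
  have hcast : (Bad.card : ℝ) + (NotBad.card : ℝ) = (n:ℝ)^m := by
    have h1 := congrArg (Nat.cast (R := ℝ)) hsplitB
    push_cast at h1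
    linarith
  have hleR : ((NotBad.card : ℕ) : ℝ) ≤ (({ω : Fin m → Fin n |
      Module.finrank F (V.map (LinearMap.funLeft F F ω)) = k ∧
      ∀ w ∈ V.map (LinearMap.funLeft F F ω), w ≠ 0 →
        ((B : ℝ) - 1) / ((B : ℝ) + 1) * δ * m ≤
          (({i | w i ≠ 0} : Set (Fin m)).ncard : ℝ)}).ncard : ℝ) := by
    exact_mod_cast hle
  linarith [hfinalBad, hcast, hleR]

end RandProjAux
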